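/- Every complement minimally non-totally unimodular 0,1 matrix has odd size. That is, if A is a square 0,1 matrix such that every matrix in the complement orbit of A is minimally non-totally unimodular, then the size n of A is odd. -/

import Mathlib

/-- All the nonzero maximal (m×m) subdeterminants of `A` have the same absolute value. -/
def Equimodular {m n : ℕ} (A : Matrix (Fin m) (Fin n) ℚ) : Prop :=
  ∃ d : ℚ, ∀ g : Fin m ↪ Fin n,
    (A.submatrix id g).det ≠ 0 → |(A.submatrix id g).det| = d

/-- Every set of linearly independent rows of `A` forms an equimodular matrix. -/
def TotallyEquimodular {m n : ℕ} (A : Matrix (Fin m) (Fin n) ℚ) : Prop :=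
  ∀ (k : ℕ) (e : Fin k ↪ Fin m),
    LinearIndependent ℚ (fun i => A (e i)) → Equimodular (A.submatrix e id)

/-- `A` is not totally unimodular but every proper submatrix of `A` is. -/
def MinNonTU {m n : ℕ} (A : Matrix (Fin m) (Fin n) ℚ) : Prop :=
  ¬ A.IsTotallyUnimodular ∧
    ∀ (k l : ℕ) (e : Fin k ↪ Fin m) (f : Fin l ↪ Fin n), k < m ∨ l < n →
      (A.submatrix e f).IsTotallyUnimodular

/-- All entries of `A` are `0` or `1`. -/
def ZeroOne {m n : ℕ} (A : Matrix (Fin m) (Fin n) ℚ) : Prop :=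
  ∀ i j, A i j = 0 ∨ A i j = 1

/-- Row-`i` complement of a `0,1` matrix: row `i` is kept, every other row is
replaced by its mod-2 sum with row `i`. -/
def rowCompl {m n : ℕ} (A : Matrix (Fin m) (Fin n) ℚ) (i : Fin m) :
    Matrix (Fin m) (Fin n) ℚ :=
  Matrix.of fun r c => if r = i then A i c else if A r c = A i c then 0 else 1

/-- Column-`j` complement of a `0,1` matrix. -/
def colCompl {m n : ℕ} (A : Matrix (Fin m) (Fin n) ℚ) (j : Fin n) :
    Matrix (Fin m) (Fin n) ℚ :=
  Matrix.of fun r c => if c = j then A r j else if A r c = A r j then 0 else 1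

/-- Membership in the complement orbit of `A`. -/
inductive InComplOrbit {m n : ℕ} (A : Matrix (Fin m) (Fin n) ℚ) :
    Matrix (Fin m) (Fin n) ℚ → Prop
  | base : InComplOrbit A A
  | row (B : Matrix (Fin m) (Fin n) ℚ) (i : Fin m) :
      InComplOrbit A B → InComplOrbit A (rowCompl B i)
  | col (B : Matrix (Fin m) (Fin n) ℚ) (j : Fin n) :
      InComplOrbit A B → InComplOrbit A (colCompl B j)

namespace Stmt10Aux
open Matrix

lemma mem_signRange {x : ℚ} :
    x ∈ Set.range (SignType.cast : SignType → ℚ) ↔ x = 0 ∨ x = 1 ∨ x = -1 := by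
  constructor
  · rintro ⟨s, rfl⟩; cases s <;> simp
  · rintro (rfl | rfl | rfl)
    exacts [⟨SignType.zero, by simp⟩, ⟨SignType.pos, by simp⟩, ⟨SignType.neg, by simp⟩]

lemma minor_sign {n k : ℕ} {B : Matrix (Fin n) (Fin n) ℚ} (hB : MinNonTU B)
    (hk : k < n) (e f : Fin k → Fin n) (he : Function.Injective e) (hf : Function.Injective f) :
    (B.submatrix e f).det ∈ Set.range (SignType.cast : SignType → ℚ) := by
  have h1 := hB.2 k k ⟨e, he⟩ ⟨f, hf⟩ (Or.inl hk) k id id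
    Function.injective_id Function.injective_id
  simpa using h1

lemma det_not_sign {n : ℕ} {B : Matrix (Fin n) (Fin n) ℚ} (hB : MinNonTU B) :
    B.det ∉ Set.range (SignType.cast : SignType → ℚ) := by
  intro hd
  apply hB.1
  intro k f g hf hg
  rcases lt_or_ge k n with hk | hk
  · exact minor_sign hB hk f g hf hg
  · have hcard : k ≤ n := by simpa using Fintype.card_le_of_injective f hf
    have hkn : k = n := le_antisymm hcard hk
    subst hkn
    have hf' := Finite.injective_iff_bijective.mp hf
    have hg' := Finite.injective_iff_bijective.mp hg
    have habs : |(B.submatrix f g).det| = |B.det| :=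
      Matrix.abs_det_submatrix_equiv_equiv (Equiv.ofBijective f hf')
        (Equiv.ofBijective g hg') B
    rw [mem_signRange] at hd ⊢
    rcases hd with h0 | h1 | h1
    · left; rw [← abs_eq_zero] at h0 ⊢; rw [habs, h0]
    · have h2 : |B.det| = 1 := by rw [h1]; norm_num
      rw [← habs] at h2
      rcases (abs_eq (by norm_num : (0:ℚ) ≤ 1)).mp h2 with h | h
      · right; left; exact h
      · right; right; exact h
    · have h2 : |B.det| = 1 := by rw [h1]; norm_num
      rw [← habs] at h2
      rcases (abs_eq (by norm_num : (0:ℚ) ≤ 1)).mp h2 with h | h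
      · right; left; exact h
      · right; right; exact h

lemma adj_sign {m : ℕ} {B : Matrix (Fin (m+2)) (Fin (m+2)) ℚ} (hB : MinNonTU B)
    (i j : Fin (m+2)) :
    B.adjugate i j ∈ Set.range (SignType.cast : SignType → ℚ) := by
  rw [Matrix.adjugate_fin_succ_eq_det_submatrix]
  have hm := minor_sign hB (by omega : m + 1 < m + 2) (Fin.succAbove j) (Fin.succAbove i)
      Fin.succAbove_right_injective Fin.succAbove_right_injective
  rw [mem_signRange] at hm ⊢
  rcases neg_one_pow_eq_or ℚ ((j:ℕ) + i) with hp | hp <;>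
    rcases hm with hh | hh | hh <;> rw [hp, hh] <;> norm_num

lemma updateColumn_comm {n : ℕ} (M : Matrix (Fin n) (Fin n) ℚ) {p q : Fin n} (hpq : p ≠ q)
    (u v : Fin n → ℚ) :
    (M.updateCol p u).updateCol q v = (M.updateCol q v).updateCol p u := by
  ext r c
  simp only [Matrix.updateCol_apply]
  split_ifs with h1 h2 <;> try rfl
  exact absurd (h2.symm.trans h1) hpq

lemma det_updateColumn_single {k : ℕ} (M : Matrix (Fin (k+1)) (Fin (k+1)) ℚ) (p i : Fin (k+1)) :
    (M.updateCol p (Pi.single i 1)).det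
      = (-1)^((i:ℕ)+(p:ℕ)) * (M.submatrix i.succAbove p.succAbove).det := by
  rw [Matrix.det_succ_column _ p]
  rw [Fintype.sum_eq_single i]
  · rw [Matrix.updateCol_self, Pi.single_eq_same, mul_one,
      Matrix.submatrix_updateCol_succAbove]
  · intro b hb
    rw [Matrix.updateCol_self, Pi.single_eq_of_ne hb, mul_zero, zero_mul]

lemma det_updateCol_updateCol_one {n : ℕ} (p q : Fin n) (hpq : p ≠ q) (u v : Fin n → ℚ) :
    (((1 : Matrix (Fin n) (Fin n) ℚ).updateCol p u).updateCol q v).det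
      = u p * v q - u q * v p := by
  classical
  set U : Matrix (Fin n) (Fin 2) ℚ := Matrix.of fun r a =>
    if a = 0 then u r - (if r = p then 1 else 0) else v r - (if r = q then 1 else 0) with hU
  set V : Matrix (Fin 2) (Fin n) ℚ := Matrix.of fun a c =>
    if a = 0 then (if c = p then 1 else 0) else (if c = q then 1 else 0) with hV
  have hY : ((1 : Matrix (Fin n) (Fin n) ℚ).updateCol p u).updateCol q v = 1 + U * V := by
    ext r c
    simp only [Matrix.updateCol_apply, Matrix.add_apply, Matrix.mul_apply, Fin.sum_univ_two,
      Matrix.of_apply, hU, hV, Matrix.one_apply]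
    norm_num
    split_ifs <;> simp_all
  rw [hY, Matrix.det_one_add_mul_comm, Matrix.det_fin_two]
  have hVU : ∀ (a : Fin 2) (b : Fin 2), (V * U) a b
      = (if a = 0 then U p b else U q b) := by
    intro a b
    simp only [Matrix.mul_apply, Matrix.of_apply, hV]
    by_cases ha : a = 0 <;> simp [ha, ite_mul, Finset.sum_ite_eq']
  simp only [Matrix.add_apply, hVU]
  simp only [Matrix.one_apply, hU, Matrix.of_apply]
  norm_num [hpq, Ne.symm hpq]
  ring


lemma signRange_pow_mul {x : ℚ} (n : ℕ) (hx : x ∈ Set.range (SignType.cast : SignType → ℚ)) :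
    (-1)^n * x ∈ Set.range (SignType.cast : SignType → ℚ) := by
  rw [mem_signRange] at hx ⊢
  rcases neg_one_pow_eq_or ℚ n with h | h <;> rcases hx with h2|h2|h2 <;> rw [h, h2] <;> norm_num

lemma key_identity {m : ℕ} {B : Matrix (Fin (m+2)) (Fin (m+2)) ℚ} (hB : MinNonTU B)
    (p q c₁ c₂ : Fin (m+2)) (hpq : p ≠ q) (hc : c₁ ≠ c₂) :
    ∃ z ∈ Set.range (SignType.cast : SignType → ℚ),
      B.adjugate p c₁ * B.adjugate q c₂ - B.adjugate q c₁ * B.adjugate p c₂ = B.det * z := by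
  classical
  have hd0 : B.det ≠ 0 := by
    intro h0
    exact det_not_sign hB (mem_signRange.mpr (Or.inl h0))
  set u : Fin (m+2) → ℚ := fun r => B.adjugate r c₁ with hu
  set v : Fin (m+2) → ℚ := fun r => B.adjugate r c₂ with hv
  set Y := ((1 : Matrix (Fin (m+2)) (Fin (m+2)) ℚ).updateCol p u).updateCol q v with hYdef
  have hYq : ∀ k, Y k q = B.adjugate k c₂ := fun k => Matrix.updateCol_self
  have hYp : ∀ k, Y k p = B.adjugate k c₁ := fun k => by
    rw [hYdef, Matrix.updateCol_ne hpq]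
    exact Matrix.updateCol_self
  have hYo : ∀ k c, c ≠ p → c ≠ q → Y k c = (1 : Matrix (Fin (m+2)) (Fin (m+2)) ℚ) k c :=
    fun k c h1 h2 => by
      rw [hYdef, Matrix.updateCol_ne h2, Matrix.updateCol_ne h1]
  have hBY : B * Y = (B.updateCol p
        (B.det • (Pi.single c₁ 1 : Fin (m+2) → ℚ))).updateCol q
        (B.det • (Pi.single c₂ 1 : Fin (m+2) → ℚ)) := by
    ext r c
    rw [Matrix.mul_apply, Matrix.updateCol_apply, Matrix.updateCol_apply]
    by_cases hcq : c = q
    · rw [if_pos hcq]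
      have hstep : ∀ k ∈ Finset.univ, B r k * Y k c = B r k * B.adjugate k c₂ := by
        intro k _
        rw [hcq, hYq k]
      rw [Finset.sum_congr rfl hstep, ← Matrix.mul_apply, Matrix.mul_adjugate]
      simp [Matrix.one_apply, Pi.single_apply]
    · by_cases hcp : c = p
      · rw [if_neg hcq, if_pos hcp]
        have hstep : ∀ k ∈ Finset.univ, B r k * Y k c = B r k * B.adjugate k c₁ := by
          intro k _
          rw [hcp, hYp k]
        rw [Finset.sum_congr rfl hstep, ← Matrix.mul_apply, Matrix.mul_adjugate]
        simp [Matrix.one_apply, Pi.single_apply]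
      · rw [if_neg hcq, if_neg hcp]
        have hstep : ∀ k ∈ Finset.univ, B r k * Y k c
            = B r k * (1 : Matrix (Fin (m+2)) (Fin (m+2)) ℚ) k c := by
          intro k _
          rw [hYo k c hcp hcq]
        rw [Finset.sum_congr rfl hstep, ← Matrix.mul_apply, Matrix.mul_one]
  have hdet1 : B.det * Y.det = ((B.updateCol p
        (B.det • (Pi.single c₁ 1 : Fin (m+2) → ℚ))).updateCol q
        (B.det • (Pi.single c₂ 1 : Fin (m+2) → ℚ))).det := by
    rw [← Matrix.det_mul, hBY]
  have hdetY : Y.det = u p * v q - u q * v p := det_updateCol_updateCol_one p q hpq u v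
  obtain ⟨q', hq'⟩ := Fin.exists_succAbove_eq (Ne.symm hpq)
  obtain ⟨c₂', hc₂'⟩ := Fin.exists_succAbove_eq (Ne.symm hc)
  have hW : ((B.updateCol p
        (B.det • (Pi.single c₁ 1 : Fin (m+2) → ℚ))).updateCol q
        (B.det • (Pi.single c₂ 1 : Fin (m+2) → ℚ))).det
      = B.det * (B.det *
        ((B.updateCol q (Pi.single c₂ 1)).updateCol p (Pi.single c₁ 1)).det) := by
    rw [Matrix.det_updateCol_smul]
    rw [updateColumn_comm B hpq]
    rw [Matrix.det_updateCol_smul]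
  have hZdet : ((B.updateCol q (Pi.single c₂ 1)).updateCol p (Pi.single c₁ 1)).det
      = (-1)^((c₁:ℕ)+(p:ℕ)) *
        ((B.updateCol q (Pi.single c₂ 1)).submatrix c₁.succAbove p.succAbove).det :=
    det_updateColumn_single _ p c₁
  have hS : (B.updateCol q (Pi.single c₂ 1)).submatrix c₁.succAbove p.succAbove
      = (B.submatrix c₁.succAbove p.succAbove).updateCol q' (Pi.single c₂' 1) := by
    ext r c
    rw [Matrix.submatrix_apply, Matrix.updateCol_apply, Matrix.updateCol_apply,
      Matrix.submatrix_apply]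
    by_cases hcq : c = q'
    · rw [if_pos hcq, hcq, if_pos hq']
      rw [← hc₂']
      simp [Pi.single_apply, Fin.succAbove_right_injective.eq_iff]
    · rw [if_neg hcq, if_neg (fun hh =>
        hcq (Fin.succAbove_right_injective ((hh : p.succAbove c = q).trans hq'.symm)))]
  have hS2 : ((B.submatrix c₁.succAbove p.succAbove).updateCol q' (Pi.single c₂' 1)).det
      = (-1)^((c₂':ℕ)+(q':ℕ)) *
        ((B.submatrix c₁.succAbove p.succAbove).submatrix c₂'.succAbove q'.succAbove).det :=
    det_updateColumn_single _ q' c₂'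
  have hminor : ((B.submatrix c₁.succAbove p.succAbove).submatrix
      c₂'.succAbove q'.succAbove).det ∈ Set.range (SignType.cast : SignType → ℚ) := by
    rw [Matrix.submatrix_submatrix]
    exact minor_sign hB (by omega) _ _
      (Fin.succAbove_right_injective.comp Fin.succAbove_right_injective)
      (Fin.succAbove_right_injective.comp Fin.succAbove_right_injective)
  have hcancel : Y.det = B.det * ((-1)^((c₁:ℕ)+(p:ℕ)) * ((-1)^((c₂':ℕ)+(q':ℕ)) *
      ((B.submatrix c₁.succAbove p.succAbove).submatrix c₂'.succAbove q'.succAbove).det)) := by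
    apply mul_left_cancel₀ hd0
    rw [hdet1, hW, hZdet, hS, hS2]
  rw [hdetY] at hcancel
  exact ⟨_, signRange_pow_mul _ (signRange_pow_mul _ hminor), hcancel⟩


set_option maxHeartbeats 1000000 in
lemma adj_structure {m : ℕ} {B : Matrix (Fin (m+2)) (Fin (m+2)) ℚ} (hB : MinNonTU B) :
    (B.det = 2 ∨ B.det = -2) ∧ ∀ i j, B.adjugate i j = 1 ∨ B.adjugate i j = -1 := by
  have hd0 : B.det ≠ 0 := fun h0 => det_not_sign hB (mem_signRange.mpr (Or.inl h0))
  have hd1 : B.det ≠ 1 := fun h0 => det_not_sign hB (mem_signRange.mpr (Or.inr (Or.inl h0)))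
  have hdm1 : B.det ≠ -1 := fun h0 => det_not_sign hB (mem_signRange.mpr (Or.inr (Or.inr h0)))
  have hdadj : B.adjugate.det ≠ 0 := by
    rw [Matrix.det_adjugate]
    exact pow_ne_zero _ hd0
  have hval : ∀ x y z w : ℚ, (x = 0 ∨ x = 1 ∨ x = -1) → (y = 0 ∨ y = 1 ∨ y = -1) →
      (z = 0 ∨ z = 1 ∨ z = -1) → (w = 0 ∨ w = 1 ∨ w = -1) →
      x*y - z*w = 0 ∨ x*y - z*w = 1 ∨ x*y - z*w = -1 ∨ x*y - z*w = 2 ∨ x*y - z*w = -2 := by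
    rintro x y z w (rfl|rfl|rfl) (rfl|rfl|rfl) (rfl|rfl|rfl) (rfl|rfl|rfl) <;> norm_num
  have hne01 : (0 : Fin (m+2)) ≠ 1 := by
    intro hh
    have h2 := congrArg Fin.val hh
    simp [Fin.val_one] at h2
  have hex : ∃ (pp qq d₁ d₂ : Fin (m+2)), pp ≠ qq ∧ d₁ ≠ d₂ ∧
      B.adjugate pp d₁ * B.adjugate qq d₂ - B.adjugate qq d₁ * B.adjugate pp d₂ ≠ 0 := by
    by_contra hcon
    push_neg at hcon
    by_cases h0 : ∀ c, B.adjugate 0 c = 0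
    · exact hdadj (Matrix.det_eq_zero_of_row_eq_zero 0 h0)
    · push_neg at h0
      obtain ⟨c₀, hc₀⟩ := h0
      have hall : ∀ c, B.adjugate 1 c * B.adjugate 0 c₀ = B.adjugate 1 c₀ * B.adjugate 0 c := by
        intro c
        by_cases hcc : c = c₀
        · rw [hcc]
        · have h2 := hcon 0 1 c c₀ hne01 hcc
          linear_combination -h2
      set s := B.adjugate 1 c₀ / B.adjugate 0 c₀ with hs
      have hrow : ∀ c, B.adjugate 1 c = s * B.adjugate 0 c := by
        intro c
        rw [hs, div_mul_eq_mul_div, eq_div_iff hc₀]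
        exact hall c
      apply hdadj
      have h4 := Matrix.det_updateRow_add_smul_self B.adjugate (Ne.symm hne01) (-s)
      rw [← h4]
      apply Matrix.det_eq_zero_of_row_eq_zero 1
      intro j
      rw [Matrix.updateRow_self]
      simp only [Pi.add_apply, Pi.smul_apply, smul_eq_mul]
      rw [hrow j]
      ring
  obtain ⟨pp, qq, d₁, d₂, hppqq, hd12, hmu⟩ := hex
  obtain ⟨z, hz, heq⟩ := key_identity hB pp qq d₁ d₂ hppqq hd12
  have hz0 : z ≠ 0 := by
    rintro rfl
    rw [mul_zero] at heq
    exact hmu heq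
  have hdmu : B.det = (B.adjugate pp d₁ * B.adjugate qq d₂
        - B.adjugate qq d₁ * B.adjugate pp d₂)
      ∨ B.det = -(B.adjugate pp d₁ * B.adjugate qq d₂
        - B.adjugate qq d₁ * B.adjugate pp d₂) := by
    rcases mem_signRange.mp hz with hzz|hzz|hzz
    · exact absurd hzz hz0
    · left; rw [heq, hzz, mul_one]
    · right; rw [heq, hzz]; ring
  have hd2 : B.det = 2 ∨ B.det = -2 := by
    have h5 := hval _ _ _ _ (mem_signRange.mp (adj_sign hB pp d₁))
      (mem_signRange.mp (adj_sign hB qq d₂)) (mem_signRange.mp (adj_sign hB qq d₁))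
      (mem_signRange.mp (adj_sign hB pp d₂))
    rcases hdmu with hh|hh <;> rcases h5 with h6|h6|h6|h6|h6 <;> rw [h6] at hh <;>
      (try norm_num at hh) <;> tauto
  refine ⟨hd2, fun r c => ?_⟩
  rcases mem_signRange.mp (adj_sign hB r c) with h0 | h1 | h1
  · exfalso
    by_cases hrow : ∀ c', B.adjugate r c' = 0
    · exact hdadj (Matrix.det_eq_zero_of_row_eq_zero r hrow)
    · push_neg at hrow
      obtain ⟨c', hc'⟩ := hrow
      have hcc : c ≠ c' := by rintro rfl; exact hc' h0
      have hcol : ∀ r', B.adjugate r' c = 0 := by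
        intro r'
        by_cases hrr : r' = r
        · rw [hrr]; exact h0
        · obtain ⟨z, hz, heq⟩ := key_identity hB r r' c c' (fun hh => hrr hh.symm) hcc
          rw [h0, zero_mul, zero_sub] at heq
          rcases mem_signRange.mp (adj_sign hB r' c) with e1|e1|e1
          · exact e1
          all_goals
            exfalso
            rcases mem_signRange.mp (adj_sign hB r c') with e2|e2|e2
            · exact hc' e2
            all_goals
              rcases mem_signRange.mp hz with e3|e3|e3 <;> rcases hd2 with e4|e4 <;>
                rw [e1, e2, e3, e4] at heq <;> norm_num at heq
      exact hdadj (Matrix.det_eq_zero_of_column_eq_zero c hcol)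
  · left; exact h1
  · right; exact h1


lemma colsum_even {m : ℕ} {B : Matrix (Fin (m+2)) (Fin (m+2)) ℚ} (hB : MinNonTU B)
    (h01 : ZeroOne B) (c : Fin (m+2)) : ∃ t : ℤ, (∑ r, B r c) = 2 * t := by
  obtain ⟨hd2, hadj⟩ := adj_structure hB
  have hmul : ∑ r, B.adjugate 0 r * B r c
      = B.det * (if (0 : Fin (m+2)) = c then 1 else 0) := by
    have hh := Matrix.adjugate_mul B
    have h2 := congrFun (congrFun hh 0) c
    rw [Matrix.mul_apply] at h2
    rw [h2]
    simp [Matrix.one_apply]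
  have hsplit : (∑ r, B r c)
      = (∑ r, B.adjugate 0 r * B r c) + ∑ r, (1 - B.adjugate 0 r) * B r c := by
    rw [← Finset.sum_add_distrib]
    exact Finset.sum_congr rfl fun r _ => by ring
  have hterm : ∀ r : Fin (m+2), ∃ t : ℤ, (1 - B.adjugate 0 r) * B r c = 2 * t := by
    intro r
    rcases hadj 0 r with hh | hh
    · exact ⟨0, by rw [hh]; ring⟩
    · rcases h01 r c with h2 | h2
      · exact ⟨0, by rw [hh, h2]; ring⟩
      · exact ⟨1, by rw [hh, h2]; norm_num⟩
  choose t ht using hterm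
  have hfirst : ∃ t₀ : ℤ, ∑ r, B.adjugate 0 r * B r c = 2 * t₀ := by
    by_cases h0c : (0 : Fin (m+2)) = c
    · rcases hd2 with hd | hd
      · exact ⟨1, by rw [hmul, if_pos h0c, hd]; norm_num⟩
      · exact ⟨-1, by rw [hmul, if_pos h0c, hd]; norm_num⟩
    · exact ⟨0, by rw [hmul, if_neg h0c]; norm_num⟩
  obtain ⟨t₀, ht₀⟩ := hfirst
  refine ⟨t₀ + ∑ r, t r, ?_⟩
  rw [hsplit, ht₀, Finset.sum_congr rfl fun r _ => ht r]
  push_cast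
  rw [← Finset.mul_sum]
  ring

end Stmt10Aux

open Stmt10Aux in
theorem stmt10 {n : ℕ} (A : Matrix (Fin n) (Fin n) ℚ) (h01 : ZeroOne A)
    (h : ∀ B : Matrix (Fin n) (Fin n) ℚ, InComplOrbit A B → MinNonTU B) :
    Odd n := by
  rcases n with _ | _ | m
  · exfalso
    apply (h A InComplOrbit.base).1
    intro k f g hf hg
    cases k with
    | zero => exact ⟨1, by simp⟩
    | succ k' => exact (f 0).elim0
  · exact ⟨0, rfl⟩
  · have hA := h A InComplOrbit.base
    have hd0 : A.det ≠ 0 := fun h0 => det_not_sign hA (mem_signRange.mpr (Or.inl h0))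
    have hA1 : ∃ i c, A i c = 1 := by
      by_contra hcon
      push_neg at hcon
      apply hd0
      have hzero : A = 0 := by
        ext i c
        rcases h01 i c with h0 | h1
        · exact h0
        · exact absurd h1 (hcon i c)
      rw [hzero]
      exact Matrix.det_zero
    obtain ⟨i, c, hic⟩ := hA1
    have hCorb : InComplOrbit A (rowCompl A i) := InComplOrbit.row A i InComplOrbit.base
    have hC01 : ZeroOne (rowCompl A i) := by
      intro r c'
      by_cases hr : r = i
      · simpa [rowCompl, hr] using h01 i c'
      · by_cases hrc : A r c' = A i c'
        · left; simp [rowCompl, hr, hrc]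
        · right; simp [rowCompl, hr, hrc]
    obtain ⟨t₁, ht₁⟩ := colsum_even hA h01 c
    obtain ⟨t₂, ht₂⟩ := colsum_even (h _ hCorb) hC01 c
    have hterm : ∀ r : Fin (m+2), rowCompl A i r c + A r c = if r = i then 2 else 1 := by
      intro r
      by_cases hr : r = i
      · rw [if_pos hr, hr]
        norm_num [rowCompl, hic]
      · rw [if_neg hr]
        rcases h01 r c with h0 | h1
        · have hne : ¬ (A r c = A i c) := by rw [h0, hic]; norm_num
          norm_num [rowCompl, hr, hne, h0, hic]
        · have he : A r c = A i c := by rw [h1, hic]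
          norm_num [rowCompl, hr, he, h1, hic]
    have hsum : (∑ r, rowCompl A i r c) + (∑ r, A r c) = (m:ℚ) + 3 := by
      rw [← Finset.sum_add_distrib]
      rw [Finset.sum_congr rfl fun r _ => hterm r]
      have h12 : ∀ r : Fin (m+2), (if r = i then (2:ℚ) else 1) = 1 + (if r = i then 1 else 0) := by
        intro r; split_ifs <;> norm_num
      rw [Finset.sum_congr rfl fun r _ => h12 r, Finset.sum_add_distrib]
      simp [Finset.sum_ite_eq']
      ring
    have hz : ((m:ℤ) + 3) = 2 * (t₂ + t₁) := by
      have hq : (m:ℚ) + 3 = 2 * ((t₂:ℚ) + t₁) := by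
        rw [← hsum, ht₁, ht₂]; ring
      exact_mod_cast hq
    rcases Nat.even_or_odd (m+2) with he | ho
    · exfalso
      obtain ⟨r, hr⟩ := he
      omega
    · exact ho
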